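/- For every n ≥ 1, the number of spanning rooted forests of the path graph P_n in which vertex 1 is a root equals F(2n−1). -/

import Mathlib

/-- A spanning rooted forest of a graph `G`: a spanning acyclic subgraph (given by its
edge set) together with a set of roots containing exactly one root in each tree
(connected component). -/
structure RootedForest {V : Type*} (G : SimpleGraph V) where
  edges : Set (Sym2 V)
  roots : Set V
  edges_sub : edges ⊆ G.edgeSet
  acyclic : (SimpleGraph.fromEdgeSet edges).IsAcyclic
  unique_root : ∀ v : V, ∃! r, r ∈ roots ∧ (SimpleGraph.fromEdgeSet edges).Reachable v r

namespace PathForestAux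

open SimpleGraph

inductive Dir : Type | L | R | Rt
deriving DecidableEq

instance : Fintype Dir := ⟨{Dir.L, Dir.R, Dir.Rt}, fun x => by cases x <;> simp⟩

/-- The `k`-th edge of the path graph on `Fin n`. -/
def pe (n k : ℕ) (h : k + 1 < n) : Sym2 (Fin n) := s(⟨k, by omega⟩, ⟨k + 1, h⟩)

/-- The `k`-th path edge is in `S`. -/
def EIn {n : ℕ} (S : Set (Sym2 (Fin n))) (k : ℕ) : Prop := ∃ h : k + 1 < n, pe n k h ∈ S

variable {n : ℕ} {S : Set (Sym2 (Fin n))}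

lemma pe_eq {n k : ℕ} (h : k + 1 < n) {a b : Fin n} (h1 : a.val = k) (h2 : b.val = k + 1) :
    pe n k h = s(a, b) := by
  have ha : a = ⟨k, Nat.lt_of_succ_lt h⟩ := Fin.ext h1
  have hb : b = ⟨k + 1, h⟩ := Fin.ext h2
  subst ha hb
  rfl

lemma pe_eq' {n k : ℕ} (h : k + 1 < n) {a b : Fin n} (h1 : a.val = k + 1) (h2 : b.val = k) :
    pe n k h = s(a, b) := by
  rw [Sym2.eq_swap]
  exact pe_eq h h2 h1

lemma mem_S_cases (hS : S ⊆ (pathGraph n).edgeSet) {u v : Fin n} (h : s(u, v) ∈ S) :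
    u.val + 1 = v.val ∨ v.val + 1 = u.val := by
  have := hS h
  rw [mem_edgeSet, pathGraph_adj] at this
  exact this

lemma walk_interval (hS : S ⊆ (pathGraph n).edgeSet) {u v : Fin n}
    (p : (fromEdgeSet S).Walk u v) :
    ∀ k, min u.val v.val ≤ k → k < max u.val v.val → EIn S k := by
  induction p with
  | nil => intro k h1 h2; omega
  | @cons a b c hadj p ih =>
    intro k hk1 hk2
    rw [fromEdgeSet_adj] at hadj
    obtain ⟨hmem, hne⟩ := hadj
    rcases mem_S_cases hS hmem with hab | hab
    · by_cases hk : k = a.val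
      · refine ⟨by omega, ?_⟩
        rw [pe_eq (by omega) (a := a) (b := b) (by omega) (by omega)]
        exact hmem
      · exact ih k (by omega) (by omega)
    · by_cases hk : k = b.val
      · refine ⟨by omega, ?_⟩
        rw [pe_eq' (by omega) (a := a) (b := b) (by omega) (by omega)]
        exact hmem
      · exact ih k (by omega) (by omega)

lemma reach_interval (hS : S ⊆ (pathGraph n).edgeSet) {u v : Fin n}
    (h : (fromEdgeSet S).Reachable u v) :
    ∀ k, min u.val v.val ≤ k → k < max u.val v.val → EIn S k := by
  obtain ⟨p⟩ := h
  exact walk_interval hS p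

lemma reach_of_interval_aux :
    ∀ d (u v : Fin n), u.val ≤ v.val → v.val - u.val = d →
      (∀ k, u.val ≤ k → k < v.val → EIn S k) → (fromEdgeSet S).Reachable u v := by
  intro d
  induction d with
  | zero =>
    intro u v h1 h2 _
    have : u = v := Fin.ext (by omega)
    exact this ▸ Reachable.refl u
  | succ d ih =>
    intro u v h1 h2 hk
    have hu1 : u.val + 1 < n := by have := v.isLt; omega
    have hval : (⟨u.val + 1, hu1⟩ : Fin n).val = u.val + 1 := rfl
    obtain ⟨h', hmem⟩ := hk u.val le_rfl (by omega)
    have hadj : (fromEdgeSet S).Adj u ⟨u.val + 1, hu1⟩ := by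
      rw [fromEdgeSet_adj]
      constructor
      · exact (pe_eq h' (a := u) (b := ⟨u.val + 1, hu1⟩) rfl rfl) ▸ hmem
      · intro hc
        exact absurd (congrArg Fin.val hc) (by simp)
    exact hadj.reachable.trans
      (ih ⟨u.val + 1, hu1⟩ v (by omega) (by omega) (fun k hk1 hk2 => hk k (by omega) hk2))

lemma reach_of_interval {u v : Fin n}
    (h : ∀ k, min u.val v.val ≤ k → k < max u.val v.val → EIn S k) :
    (fromEdgeSet S).Reachable u v := by
  rcases le_total u.val v.val with huv | huv
  · exact reach_of_interval_aux _ u v huv rfl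
      (fun k h1 h2 => h k (by omega) (by omega))
  · exact (reach_of_interval_aux _ v u huv rfl
      (fun k h1 h2 => h k (by omega) (by omega))).symm

/-- Any subset of the path's edges gives an acyclic graph. -/
lemma acyclic_of_sub (hS : S ⊆ (pathGraph n).edgeSet) : (fromEdgeSet S).IsAcyclic := by
  rw [isAcyclic_iff_forall_adj_isBridge]
  intro v w hadj
  rw [isBridge_iff]
  rw [fromEdgeSet_adj] at hadj
  obtain ⟨hmem, hne⟩ := hadj
  have hdel : fromEdgeSet S \ fromEdgeSet {s(v, w)} = fromEdgeSet (S \ {s(v, w)}) := by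
    ext a b
    simp only [sdiff_adj, fromEdgeSet_adj, Set.mem_diff, Set.mem_singleton_iff]
    tauto
  show ¬(fromEdgeSet S \ fromEdgeSet {s(v, w)}).Reachable v w
  rw [hdel]
  intro hreach
  have hsub : S \ {s(v, w)} ⊆ (pathGraph n).edgeSet := fun e he => hS he.1
  have := reach_interval hsub hreach
  rcases mem_S_cases hS hmem with hvw | hvw
  · obtain ⟨h', hmem'⟩ := this v.val (by omega) (by omega)
    exact hmem'.2 (pe_eq h' (a := v) (b := w) rfl (by omega))
  · obtain ⟨h', hmem'⟩ := this w.val (by omega) (by omega)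
    exact hmem'.2 (pe_eq' h' (a := v) (b := w) (by omega) rfl)

/-! ### Encoding forests by direction functions -/

def Ef {n : ℕ} (f : Fin n → Dir) : Set (Sym2 (Fin n)) :=
  {e | ∃ (k : ℕ) (h : k + 1 < n), e = pe n k h ∧
    (f ⟨k, Nat.lt_of_succ_lt h⟩ = Dir.R ∨ f ⟨k + 1, h⟩ = Dir.L)}

lemma Ef_sub (f : Fin n → Dir) : Ef f ⊆ (pathGraph n).edgeSet := by
  rintro e ⟨k, h, rfl, -⟩
  rw [pe, mem_edgeSet, pathGraph_adj]
  left; rfl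

lemma EIn_Ef {f : Fin n → Dir} {k : ℕ} :
    EIn (Ef f) k ↔ ∃ h : k + 1 < n,
      (f ⟨k, Nat.lt_of_succ_lt h⟩ = Dir.R ∨ f ⟨k + 1, h⟩ = Dir.L) := by
  constructor
  · rintro ⟨h, k', h', heq, hor⟩
    have hkk : k = k' := by
      have := heq
      simp only [pe, Sym2.eq_iff, Fin.mk.injEq] at this
      omega
    subst hkk
    exact ⟨h, hor⟩
  · rintro ⟨h, hor⟩
    exact ⟨h, k, h, rfl, hor⟩

/-- The conditions defining our encoding: vertex `0` is a root, the last vertex does not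
point right, and no vertex pointing right is followed by one pointing left. -/
def Ok {n : ℕ} (f : Fin n → Dir) : Prop :=
  (∀ h : 0 < n, f ⟨0, h⟩ = Dir.Rt) ∧
  (∀ i : Fin n, i.val + 1 = n → f i ≠ Dir.R) ∧
  (∀ (k : ℕ) (h : k + 1 < n), ¬(f ⟨k, Nat.lt_of_succ_lt h⟩ = Dir.R ∧ f ⟨k + 1, h⟩ = Dir.L))

lemma ex_up {f : Fin n → Dir} (hOk : Ok f) :
    ∀ (d : ℕ) (v : Fin n), n ≤ v.val + d → f v = Dir.R →
      ∃ r : Fin n, f r = Dir.Rt ∧ (fromEdgeSet (Ef f)).Reachable v r ∧ v.val < r.val := by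
  intro d
  induction d with
  | zero => intro v h1 _; exact absurd v.isLt (by omega)
  | succ d ih =>
    intro v h1 h2
    have hlt : v.val + 1 < n := by
      rcases Nat.lt_or_ge (v.val + 1) n with h | h
      · exact h
      · have hvn : v.val + 1 = n := by have := v.isLt; omega
        exact absurd h2 (hOk.2.1 v hvn)
    set w : Fin n := ⟨v.val + 1, hlt⟩ with hw
    have hwval : w.val = v.val + 1 := rfl
    have hmem : pe n v.val hlt ∈ Ef f := ⟨v.val, hlt, rfl, Or.inl h2⟩
    have hadj : (fromEdgeSet (Ef f)).Adj v w := by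
      rw [fromEdgeSet_adj]
      refine ⟨(pe_eq hlt (a := v) (b := w) rfl rfl) ▸ hmem, ?_⟩
      intro hc
      exact absurd (congrArg Fin.val hc) (by omega)
    have hfw : f w ≠ Dir.L := fun hl => hOk.2.2 v.val hlt ⟨h2, hl⟩
    cases hfwv : f w with
    | L => exact absurd hfwv hfw
    | Rt => exact ⟨w, hfwv, hadj.reachable, by omega⟩
    | R =>
      obtain ⟨r, h1', h2', h3'⟩ := ih w (by omega) hfwv
      exact ⟨r, h1', hadj.reachable.trans h2', by omega⟩

lemma ex_down {f : Fin n → Dir} (hOk : Ok f) :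
    ∀ (d : ℕ) (v : Fin n), v.val ≤ d → f v = Dir.L →
      ∃ r : Fin n, f r = Dir.Rt ∧ (fromEdgeSet (Ef f)).Reachable v r ∧ r.val < v.val := by
  intro d
  induction d with
  | zero =>
    intro v h1 h2
    have hv : v = ⟨0, v.pos⟩ := Fin.ext (show v.val = 0 by omega)
    rw [hv, hOk.1 v.pos] at h2
    exact absurd h2 (by decide)
  | succ d ih =>
    intro v h1 h2
    by_cases hv0 : v.val = 0
    · have hv : v = ⟨0, v.pos⟩ := Fin.ext (show v.val = 0 by omega)
      rw [hv, hOk.1 v.pos] at h2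
      exact absurd h2 (by decide)
    · have hlt : (v.val - 1) + 1 < n := by have := v.isLt; omega
      set u : Fin n := ⟨v.val - 1, Nat.lt_of_succ_lt hlt⟩ with hu
      have huval : u.val = v.val - 1 := rfl
      have hveq : (⟨(v.val - 1) + 1, hlt⟩ : Fin n) = v := Fin.ext (show v.val - 1 + 1 = v.val by omega)
      have hmem : pe n (v.val - 1) hlt ∈ Ef f :=
        ⟨v.val - 1, hlt, rfl, Or.inr (by rw [hveq]; exact h2)⟩
      have hadj : (fromEdgeSet (Ef f)).Adj u v := by
        rw [fromEdgeSet_adj]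
        refine ⟨(pe_eq hlt (a := u) (b := v) rfl (by omega)) ▸ hmem, ?_⟩
        intro hc
        exact absurd (congrArg Fin.val hc) (by omega)
      have hfu : f u ≠ Dir.R := fun hr =>
        hOk.2.2 (v.val - 1) hlt ⟨hr, by rw [hveq]; exact h2⟩
      cases hfuv : f u with
      | R => exact absurd hfuv hfu
      | Rt => exact ⟨u, hfuv, hadj.symm.reachable, by omega⟩
      | L =>
        obtain ⟨r, h1', h2', h3'⟩ := ih u (by omega) hfuv
        exact ⟨r, h1', hadj.symm.reachable.trans h2', by omega⟩

lemma root_exists {f : Fin n → Dir} (hOk : Ok f) (v : Fin n) :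
    ∃ r : Fin n, f r = Dir.Rt ∧ (fromEdgeSet (Ef f)).Reachable v r := by
  cases hv : f v with
  | Rt => exact ⟨v, hv, Reachable.refl v⟩
  | R =>
    obtain ⟨r, h1, h2, -⟩ := ex_up hOk (n - v.val) v (by omega) hv
    exact ⟨r, h1, h2⟩
  | L =>
    obtain ⟨r, h1, h2, -⟩ := ex_down hOk v.val v le_rfl hv
    exact ⟨r, h1, h2⟩

lemma chainL {f : Fin n → Dir} {r1 r2 : Fin n} (h1 : f r1 = Dir.Rt)
    (hint : ∀ k, r1.val ≤ k → k < r2.val → EIn (Ef f) k) :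
    ∀ (d j : ℕ) (hj : j < n), j = r1.val + 1 + d → j ≤ r2.val → f ⟨j, hj⟩ = Dir.L := by
  intro d
  induction d with
  | zero =>
    intro j hj hjeq hjle
    obtain ⟨h, hor⟩ := EIn_Ef.mp (hint r1.val le_rfl (by omega))
    rcases hor with hR | hL
    · have hR' : f r1 = Dir.R := hR
      rw [h1] at hR'
      exact absurd hR' (by decide)
    · have : (⟨j, hj⟩ : Fin n) = ⟨r1.val + 1, h⟩ := Fin.ext (show j = r1.val + 1 by omega)
      rw [this]; exact hL
  | succ d ih =>
    intro j hj hjeq hjle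
    have hprev : f ⟨j - 1, by omega⟩ = Dir.L := ih (j - 1) (by omega) (by omega) (by omega)
    obtain ⟨h, hor⟩ := EIn_Ef.mp (hint (j - 1) (by omega) (by omega))
    rcases hor with hR | hL
    · have hR' : f ⟨j - 1, by omega⟩ = Dir.R := hR
      rw [hprev] at hR'
      exact absurd hR' (by decide)
    · have : (⟨j, hj⟩ : Fin n) = ⟨(j - 1) + 1, h⟩ := Fin.ext (show j = (j - 1) + 1 by omega)
      rw [this]; exact hL

lemma roots_unique_le {f : Fin n → Dir} {r1 r2 : Fin n} (h1 : f r1 = Dir.Rt)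
    (h2 : f r2 = Dir.Rt) (hle : r1.val ≤ r2.val)
    (hr : (fromEdgeSet (Ef f)).Reachable r1 r2) : r1 = r2 := by
  by_cases heq : r1.val = r2.val
  · exact Fin.ext heq
  · have hlt : r1.val < r2.val := by omega
    have hint : ∀ k, r1.val ≤ k → k < r2.val → EIn (Ef f) k := by
      intro k hk1 hk2
      exact reach_interval (Ef_sub f) hr k (by omega) (by omega)
    have := chainL h1 hint (r2.val - r1.val - 1) r2.val r2.isLt (by omega) le_rfl
    have h2' : f ⟨r2.val, r2.isLt⟩ = Dir.Rt := h2
    rw [h2'] at this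
    exact absurd this (by decide)

lemma roots_unique {f : Fin n → Dir} {r1 r2 : Fin n} (h1 : f r1 = Dir.Rt)
    (h2 : f r2 = Dir.Rt) (hr : (fromEdgeSet (Ef f)).Reachable r1 r2) : r1 = r2 := by
  rcases le_total r1.val r2.val with h | h
  · exact roots_unique_le h1 h2 h hr
  · exact (roots_unique_le h2 h1 h hr.symm).symm

/-- The forest associated to a direction function. -/
def forestOf {f : Fin n → Dir} (hOk : Ok f) : RootedForest (pathGraph n) where
  edges := Ef f
  roots := {v | f v = Dir.Rt}
  edges_sub := Ef_sub f
  acyclic := acyclic_of_sub (Ef_sub f)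
  unique_root := fun v => by
    obtain ⟨r, hr1, hr2⟩ := root_exists hOk v
    refine ⟨r, ⟨hr1, hr2⟩, ?_⟩
    rintro r' ⟨h1', h2'⟩
    exact roots_unique h1' hr1 (h2'.symm.trans hr2)

/-! ### Decoding a forest into a direction function -/

lemma rf_ext {V : Type*} {G : SimpleGraph V} {F1 F2 : RootedForest G}
    (h1 : F1.edges = F2.edges) (h2 : F1.roots = F2.roots) : F1 = F2 := by
  cases F1; cases F2; cases h1; cases h2; rfl

open Classical in
noncomputable def decode {n : ℕ} (F : RootedForest (pathGraph n)) (rt : Fin n → Fin n) :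
    Fin n → Dir := fun v =>
  if v ∈ F.roots then Dir.Rt else if (rt v).val < v.val then Dir.L else Dir.R

section Decode

variable {F : RootedForest (pathGraph n)} {rt : Fin n → Fin n}

lemma decode_of_mem {v : Fin n} (hv : v ∈ F.roots) : decode F rt v = Dir.Rt := by
  unfold decode
  rw [if_pos hv]

lemma decode_Rt_iff {v : Fin n} : decode F rt v = Dir.Rt ↔ v ∈ F.roots := by
  constructor
  · intro h
    by_contra hv
    unfold decode at h
    rw [if_neg hv] at h
    split at h <;> exact absurd h (by decide)
  · exact decode_of_mem

lemma decode_R (hrtT : ∀ v, rt v ∈ F.roots) {v : Fin n} (h : decode F rt v = Dir.R) :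
    v ∉ F.roots ∧ v.val < (rt v).val := by
  unfold decode at h
  split at h
  · exact absurd h (by decide)
  · rename_i hv
    split at h
    · exact absurd h (by decide)
    · rename_i hlt
      refine ⟨hv, ?_⟩
      have hne : rt v ≠ v := fun hc => hv (hc ▸ hrtT v)
      have : (rt v).val ≠ v.val := fun hc => hne (Fin.ext hc)
      omega

lemma decode_L {v : Fin n} (h : decode F rt v = Dir.L) :
    v ∉ F.roots ∧ (rt v).val < v.val := by
  unfold decode at h
  split at h
  · exact absurd h (by decide)
  · rename_i hv
    split at h
    · rename_i hlt; exact ⟨hv, hlt⟩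
    · exact absurd h (by decide)

variable (hrtT : ∀ v, rt v ∈ F.roots)
  (hrtR : ∀ v, (fromEdgeSet F.edges).Reachable v (rt v))
  (hrtU : ∀ v r, r ∈ F.roots → (fromEdgeSet F.edges).Reachable v r → r = rt v)

include hrtT hrtR hrtU

lemma rt_self {v : Fin n} (hv : v ∈ F.roots) : rt v = v :=
  (hrtU v v hv (Reachable.refl v)).symm

lemma rt_comp {u w : Fin n} (h : (fromEdgeSet F.edges).Reachable u w) : rt u = rt w :=
  (hrtU u (rt w) (hrtT w) (h.trans (hrtR w))).symm

/-- The edge below a vertex pointing right is in the forest. -/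
lemma edge_of_R {v : Fin n} (h : decode F rt v = Dir.R) : EIn F.edges v.val := by
  obtain ⟨hv, hlt⟩ := decode_R hrtT h
  exact reach_interval F.edges_sub (hrtR v) v.val (by omega) (by omega)

lemma edge_of_L {v : Fin n} (h : decode F rt v = Dir.L) : EIn F.edges (v.val - 1) := by
  obtain ⟨hv, hlt⟩ := decode_L h
  exact reach_interval F.edges_sub (hrtR v) (v.val - 1) (by omega) (by omega)

lemma decode_ok (h0 : (⟨0, hn⟩ : Fin n) ∈ F.roots) : Ok (decode F rt) := by
  refine ⟨?_, ?_, ?_⟩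
  · intro h
    exact decode_of_mem h0
  · intro i hi hR
    obtain ⟨hv, hlt⟩ := decode_R hrtT hR
    have := (rt i).isLt
    omega
  · rintro k h ⟨hR, hL⟩
    set u : Fin n := ⟨k, Nat.lt_of_succ_lt h⟩ with hu
    set w : Fin n := ⟨k + 1, h⟩ with hw
    have huval : u.val = k := rfl
    have hwval : w.val = k + 1 := rfl
    obtain ⟨hu1, hu2⟩ := decode_R hrtT hR
    obtain ⟨hw1, hw2⟩ := decode_L (rt := rt) hL
    obtain ⟨h', hmem⟩ := reach_interval F.edges_sub (hrtR u) k (by omega) (by omega)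
    have hadj : (fromEdgeSet F.edges).Adj u w := by
      rw [fromEdgeSet_adj]
      refine ⟨(pe_eq h' (a := u) (b := w) rfl rfl) ▸ hmem, ?_⟩
      intro hc
      exact absurd (congrArg Fin.val hc) (by omega)
    have := rt_comp hrtT hrtR hrtU hadj.reachable
    rw [this] at hu2
    omega

/-- One direction of `Ef_decode`. -/
lemma mem_Ef_decode {a b : Fin n} (hab : a.val + 1 = b.val) (he : s(a, b) ∈ F.edges) :
    s(a, b) ∈ Ef (decode F rt) := by
  have h : a.val + 1 < n := by have := b.isLt; omega
  have hadj : (fromEdgeSet F.edges).Adj a b := by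
    rw [fromEdgeSet_adj]
    exact ⟨he, fun hc => by exact absurd (congrArg Fin.val hc) (by omega)⟩
  have hr : rt a = rt b := rt_comp hrtT hrtR hrtU hadj.reachable
  by_cases hrk : (rt a).val ≤ a.val
  · -- b points left
    have hbT : b ∉ F.roots := by
      intro hb
      have := rt_self hrtT hrtR hrtU hb
      rw [← hr] at this
      have := congrArg Fin.val this
      omega
    have hblt : (rt b).val < b.val := by rw [← hr]; omega
    have hdb : decode F rt b = Dir.L := by
      unfold decode
      rw [if_neg hbT, if_pos hblt]
    refine ⟨a.val, h, (pe_eq h rfl hab.symm).symm, Or.inr ?_⟩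
    have hbeq : (⟨a.val + 1, h⟩ : Fin n) = b := Fin.ext hab
    rw [hbeq]
    exact hdb
  · -- a points right
    have haT : a ∉ F.roots := by
      intro ha
      have := rt_self hrtT hrtR hrtU ha
      have := congrArg Fin.val this
      omega
    have hda : decode F rt a = Dir.R := by
      unfold decode
      rw [if_neg haT, if_neg (by omega)]
    refine ⟨a.val, h, (pe_eq h rfl hab.symm).symm, Or.inl ?_⟩
    have haeq : (⟨a.val, Nat.lt_of_succ_lt h⟩ : Fin n) = a := Fin.ext rfl
    rw [haeq]
    exact hda

lemma Ef_decode : Ef (decode F rt) = F.edges := by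
  ext e
  induction e using Sym2.ind with
  | _ a b =>
    constructor
    · rintro ⟨k, h, heq, hor⟩
      rcases hor with hR | hL
      · obtain ⟨h', hmem⟩ := edge_of_R hrtT hrtR hrtU hR
        rw [heq]
        exact hmem
      · obtain ⟨h', hmem⟩ := edge_of_L hrtT hrtR hrtU hL
        rw [heq]
        exact hmem
    · intro he
      rcases mem_S_cases F.edges_sub he with hab | hab
      · exact mem_Ef_decode hrtT hrtR hrtU hab he
      · rw [Sym2.eq_swap] at he ⊢
        exact mem_Ef_decode hrtT hrtR hrtU hab he

lemma roots_decode : {v | decode F rt v = Dir.Rt} = F.roots := by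
  ext v
  exact decode_Rt_iff

end Decode

/-! ### The bijection -/

def encode {n : ℕ} (hn : 0 < n) : {f : Fin n → Dir // Ok f} →
    {F : RootedForest (pathGraph n) // (⟨0, hn⟩ : Fin n) ∈ F.roots} :=
  fun p => ⟨forestOf p.2, p.2.1 hn⟩

lemma encode_inj {n : ℕ} (hn : 0 < n) : Function.Injective (encode hn) := by
  rintro ⟨f, hf⟩ ⟨g, hg⟩ h
  have h' : forestOf hf = forestOf hg := congrArg Subtype.val h
  have hE : Ef f = Ef g := congrArg RootedForest.edges h'
  have hRset : {v | f v = Dir.Rt} = {v | g v = Dir.Rt} := congrArg RootedForest.roots h'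
  have hRt : ∀ v : Fin n, f v = Dir.Rt ↔ g v = Dir.Rt := fun v => Set.ext_iff.mp hRset v
  have key : ∀ (f g : Fin n → Dir) (hf : Ok f) (hg : Ok g), Ef f = Ef g →
      (∀ v : Fin n, f v = Dir.Rt ↔ g v = Dir.Rt) →
      ∀ v : Fin n, f v = Dir.L → g v = Dir.R → False := by
    intro f g hf hg hE hRt v hfv hgv
    obtain ⟨r, hr1, hr2, hr3⟩ := ex_down hf v.val v le_rfl hfv
    obtain ⟨r', hr1', hr2', hr3'⟩ := ex_up hg (n - v.val) v (by omega) hgv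
    have hr2g : (fromEdgeSet (Ef g)).Reachable v r := hE ▸ hr2
    have hgr : g r = Dir.Rt := (hRt r).mp hr1
    have := congrArg Fin.val (roots_unique hgr hr1' (hr2g.symm.trans hr2'))
    omega
  apply Subtype.ext
  funext v
  show f v = g v
  cases hfv : f v <;> cases hgv : g v
  · rfl
  · exact (key f g hf hg hE hRt v hfv hgv).elim
  · exact absurd ((hRt v).mpr hgv) (by rw [hfv]; decide)
  · exact (key g f hg hf hE.symm (fun v => (hRt v).symm) v hgv hfv).elim
  · rfl
  · exact absurd ((hRt v).mpr hgv) (by rw [hfv]; decide)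
  · exact absurd ((hRt v).mp hfv) (by rw [hgv]; decide)
  · exact absurd ((hRt v).mp hfv) (by rw [hgv]; decide)
  · rfl

lemma encode_surj {n : ℕ} (hn : 0 < n) : Function.Surjective (encode hn) := by
  rintro ⟨F, h0⟩
  choose rt hrt using fun v => (F.unique_root v).exists
  have hrtT : ∀ v, rt v ∈ F.roots := fun v => (hrt v).1
  have hrtR : ∀ v, (fromEdgeSet F.edges).Reachable v (rt v) := fun v => (hrt v).2
  have hrtU : ∀ v r, r ∈ F.roots → (fromEdgeSet F.edges).Reachable v r → r = rt v :=
    fun v r h1 h2 => (F.unique_root v).unique ⟨h1, h2⟩ ⟨hrtT v, hrtR v⟩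
  refine ⟨⟨decode F rt, decode_ok hrtT hrtR hrtU h0⟩, ?_⟩
  apply Subtype.ext
  exact rf_ext (Ef_decode hrtT hrtR hrtU) (roots_decode hrtT hrtR hrtU)

lemma card_eq_ok {n : ℕ} (hn : 0 < n) :
    Nat.card {F : RootedForest (pathGraph n) // (⟨0, hn⟩ : Fin n) ∈ F.roots} =
      Nat.card {f : Fin n → Dir // Ok f} :=
  (Nat.card_congr (Equiv.ofBijective _ ⟨encode_inj hn, encode_surj hn⟩)).symm

/-! ### Counting the direction functions -/

def NoRL {m : ℕ} (g : Fin m → Dir) : Prop :=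
  ∀ (k : ℕ) (h : k + 1 < m), ¬(g ⟨k, Nat.lt_of_succ_lt h⟩ = Dir.R ∧ g ⟨k + 1, h⟩ = Dir.L)

def NotEndR {m : ℕ} (g : Fin m → Dir) : Prop := ∀ i : Fin m, i.val + 1 = m → g i ≠ Dir.R

def ext1 {m : ℕ} (g : Fin m → Dir) (x : Dir) : Fin (m + 1) → Dir :=
  fun i => if h : i.val < m then g ⟨i.val, h⟩ else x

def res1 {m : ℕ} (f : Fin (m + 1) → Dir) : Fin m → Dir :=
  fun i => f ⟨i.val, by omega⟩

lemma ext1_last {m : ℕ} (g : Fin m → Dir) (x : Dir) : ext1 g x ⟨m, by omega⟩ = x :=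
  dif_neg (show ¬ m < m by omega)

lemma res1_ext1 {m : ℕ} (g : Fin m → Dir) (x : Dir) : res1 (ext1 g x) = g := by
  funext i
  exact dif_pos i.isLt

lemma ext1_res1 {m : ℕ} (f : Fin (m + 1) → Dir) : ext1 (res1 f) (f ⟨m, by omega⟩) = f := by
  funext i
  by_cases h : i.val < m
  · exact dif_pos h
  · have hi : i = ⟨m, by omega⟩ := Fin.ext (show i.val = m by have := i.isLt; omega)
    rw [hi]
    exact dif_neg (by omega)

lemma noRL_ext1 {m : ℕ} {g : Fin m → Dir} {x : Dir} (hg : NoRL g)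
    (hx : x = Dir.L → NotEndR g) : NoRL (ext1 g x) := by
  rintro k h ⟨h1, h2⟩
  by_cases hk : k + 1 < m
  · rw [show ext1 g x ⟨k, Nat.lt_of_succ_lt h⟩ = g ⟨k, Nat.lt_of_succ_lt hk⟩ from
      dif_pos (show k < m by omega)] at h1
    rw [show ext1 g x ⟨k + 1, h⟩ = g ⟨k + 1, hk⟩ from dif_pos hk] at h2
    exact hg k hk ⟨h1, h2⟩
  · have hkm : k + 1 = m := by omega
    rw [show ext1 g x ⟨k, Nat.lt_of_succ_lt h⟩ = g ⟨k, by omega⟩ from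
      dif_pos (show k < m by omega)] at h1
    rw [show ext1 g x ⟨k + 1, h⟩ = x from dif_neg (show ¬ k + 1 < m by omega)] at h2
    exact hx h2 ⟨k, by omega⟩ (show k + 1 = m by omega) h1

lemma notEndR_ext1 {m : ℕ} {g : Fin m → Dir} {x : Dir} (hx : x ≠ Dir.R) :
    NotEndR (ext1 g x) := by
  intro i hi
  rw [show ext1 g x i = x from dif_neg (show ¬ i.val < m by omega)]
  exact hx

lemma noRL_res1 {m : ℕ} {f : Fin (m + 1) → Dir} (hf : NoRL f) : NoRL (res1 f) := by
  rintro k h ⟨h1, h2⟩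
  exact hf k (by omega) ⟨h1, h2⟩

lemma notEndR_res1 {m : ℕ} {f : Fin (m + 1) → Dir} (hf : NoRL f)
    (hL : f ⟨m, by omega⟩ = Dir.L) : NotEndR (res1 f) := by
  intro i hi hR
  have h : i.val + 1 < m + 1 := by omega
  apply hf i.val h
  constructor
  · exact hR
  · rw [show (⟨i.val + 1, h⟩ : Fin (m + 1)) = ⟨m, by omega⟩ from
      Fin.ext (show i.val + 1 = m by omega)]
    exact hL

/-- First recurrence map. -/
def psiA {m : ℕ} :
    {g : Fin m → Dir // NoRL g ∧ NotEndR g} ⊕ {g : Fin m → Dir // NoRL g} →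
    {f : Fin (m + 1) → Dir // NoRL f ∧ NotEndR f}
  | Sum.inl ⟨g, hg⟩ => ⟨ext1 g Dir.L, noRL_ext1 hg.1 (fun _ => hg.2), notEndR_ext1 (by decide)⟩
  | Sum.inr ⟨g, hg⟩ => ⟨ext1 g Dir.Rt, noRL_ext1 hg (by simp), notEndR_ext1 (by decide)⟩

lemma psiA_bij {m : ℕ} : Function.Bijective (psiA (m := m)) := by
  constructor
  · rintro (⟨g, hg⟩ | ⟨g, hg⟩) (⟨g', hg'⟩ | ⟨g', hg'⟩) h
    · have hv : ext1 g Dir.L = ext1 g' Dir.L := congrArg Subtype.val h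
      have : g = g' := by
        rw [← res1_ext1 g Dir.L, ← res1_ext1 g' Dir.L, hv]
      subst this; rfl
    · have hv : ext1 g Dir.L = ext1 g' Dir.Rt := congrArg Subtype.val h
      have hc := congrFun hv ⟨m, by omega⟩
      exact absurd ((ext1_last g Dir.L).symm.trans (hc.trans (ext1_last g' Dir.Rt)))
        (by decide)
    · have hv : ext1 g Dir.Rt = ext1 g' Dir.L := congrArg Subtype.val h
      have hc := congrFun hv ⟨m, by omega⟩
      exact absurd ((ext1_last g Dir.Rt).symm.trans (hc.trans (ext1_last g' Dir.L)))
        (by decide)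
    · have hv : ext1 g Dir.Rt = ext1 g' Dir.Rt := congrArg Subtype.val h
      have : g = g' := by
        rw [← res1_ext1 g Dir.Rt, ← res1_ext1 g' Dir.Rt, hv]
      subst this; rfl
  · rintro ⟨f, hf1, hf2⟩
    cases hx : f ⟨m, by omega⟩ with
    | R => exact absurd hx (hf2 ⟨m, by omega⟩ rfl)
    | L =>
      refine ⟨Sum.inl ⟨res1 f, noRL_res1 hf1, notEndR_res1 hf1 hx⟩, ?_⟩
      apply Subtype.ext
      show ext1 (res1 f) Dir.L = f
      rw [← hx]
      exact ext1_res1 f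
    | Rt =>
      refine ⟨Sum.inr ⟨res1 f, noRL_res1 hf1⟩, ?_⟩
      apply Subtype.ext
      show ext1 (res1 f) Dir.Rt = f
      rw [← hx]
      exact ext1_res1 f

/-- Second recurrence map. -/
def psiB {m : ℕ} :
    {f : Fin (m + 1) → Dir // NoRL f ∧ NotEndR f} ⊕ {g : Fin m → Dir // NoRL g} →
    {f : Fin (m + 1) → Dir // NoRL f}
  | Sum.inl ⟨f, hf⟩ => ⟨f, hf.1⟩
  | Sum.inr ⟨g, hg⟩ => ⟨ext1 g Dir.R, noRL_ext1 hg (by simp)⟩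

lemma psiB_bij {m : ℕ} : Function.Bijective (psiB (m := m)) := by
  constructor
  · rintro (⟨f, hf⟩ | ⟨g, hg⟩) (⟨f', hf'⟩ | ⟨g', hg'⟩) h
    · have hv : f = f' := congrArg Subtype.val h
      subst hv; rfl
    · have hv : f = ext1 g' Dir.R := congrArg Subtype.val h
      exfalso
      apply hf.2 ⟨m, by omega⟩ rfl
      rw [hv]
      exact ext1_last g' Dir.R
    · have hv : ext1 g Dir.R = f' := congrArg Subtype.val h
      exfalso
      apply hf'.2 ⟨m, by omega⟩ rfl
      rw [← hv]
      exact ext1_last g Dir.R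
    · have hv : ext1 g Dir.R = ext1 g' Dir.R := congrArg Subtype.val h
      have : g = g' := by
        rw [← res1_ext1 g Dir.R, ← res1_ext1 g' Dir.R, hv]
      subst this; rfl
  · rintro ⟨f, hf⟩
    cases hx : f ⟨m, by omega⟩ with
    | R =>
      refine ⟨Sum.inr ⟨res1 f, noRL_res1 hf⟩, ?_⟩
      apply Subtype.ext
      show ext1 (res1 f) Dir.R = f
      rw [← hx]
      exact ext1_res1 f
    | L =>
      refine ⟨Sum.inl ⟨f, hf, ?_⟩, rfl⟩
      intro i hi
      rw [show i = ⟨m, by omega⟩ from Fin.ext (show i.val = m by omega), hx]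
      decide
    | Rt =>
      refine ⟨Sum.inl ⟨f, hf, ?_⟩, rfl⟩
      intro i hi
      rw [show i = ⟨m, by omega⟩ from Fin.ext (show i.val = m by omega), hx]
      decide

lemma card_AC (m : ℕ) :
    Nat.card {g : Fin m → Dir // NoRL g ∧ NotEndR g} = Nat.fib (2 * m + 1) ∧
    Nat.card {g : Fin m → Dir // NoRL g} = Nat.fib (2 * m + 2) := by
  induction m with
  | zero =>
    have h1 : ∀ p : (Fin 0 → Dir) → Prop, p (fun i => i.elim0) →
        Nat.card {g : Fin 0 → Dir // p g} = 1 := by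
      intro p hp
      rw [Nat.card_eq_one_iff_unique]
      exact ⟨⟨fun a b => Subtype.ext (funext fun i => i.elim0)⟩, ⟨⟨_, hp⟩⟩⟩
    constructor
    · rw [h1 _ ⟨fun k h => absurd h (by omega), fun i => i.elim0⟩,
        show 2 * 0 + 1 = 1 by norm_num, Nat.fib_one]
    · rw [h1 _ (fun k h => absurd h (by omega)),
        show 2 * 0 + 2 = 2 by norm_num, Nat.fib_two]
  | succ m ih =>
    have hA : Nat.card {f : Fin (m + 1) → Dir // NoRL f ∧ NotEndR f} =
        Nat.fib (2 * (m + 1) + 1) := by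
      rw [← Nat.card_congr (Equiv.ofBijective _ psiA_bij), Nat.card_sum, ih.1, ih.2,
        show 2 * (m + 1) + 1 = (2 * m + 1) + 2 by ring,
        show 2 * m + 2 = (2 * m + 1) + 1 by ring]
      exact Nat.fib_add_two.symm
    refine ⟨hA, ?_⟩
    rw [← Nat.card_congr (Equiv.ofBijective _ psiB_bij), Nat.card_sum, hA, ih.2,
      Nat.add_comm,
      show 2 * (m + 1) + 1 = (2 * m + 2) + 1 by ring,
      show 2 * (m + 1) + 2 = (2 * m + 2) + 2 by ring]
    exact Nat.fib_add_two.symm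

/-- Prepending a root. -/
def cons1 {m : ℕ} (g : Fin m → Dir) : Fin (m + 1) → Dir :=
  fun i => if h : 0 < i.val then g ⟨i.val - 1, by omega⟩ else Dir.Rt

lemma ok_cons1 {m : ℕ} {g : Fin m → Dir} (hg : NoRL g ∧ NotEndR g) : Ok (cons1 g) := by
  refine ⟨?_, ?_, ?_⟩
  · intro h
    exact dif_neg (show ¬ (0 : ℕ) < 0 by omega)
  · intro i hi hR
    by_cases h0 : 0 < i.val
    · rw [show cons1 g i = g ⟨i.val - 1, by omega⟩ from dif_pos h0] at hR
      exact hg.2 ⟨i.val - 1, by omega⟩ (show i.val - 1 + 1 = m by omega) hR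
    · rw [show cons1 g i = Dir.Rt from dif_neg h0] at hR
      exact absurd hR (by decide)
  · rintro k h ⟨h1, h2⟩
    by_cases h0 : 0 < k
    · rw [show cons1 g ⟨k, Nat.lt_of_succ_lt h⟩ = g ⟨k - 1, by omega⟩ from dif_pos h0] at h1
      rw [show cons1 g ⟨k + 1, h⟩ = g ⟨k, by omega⟩ from
        dif_pos (show 0 < k + 1 by omega)] at h2
      apply hg.1 (k - 1) (by omega)
      constructor
      · exact h1
      · rw [show (⟨k - 1 + 1, by omega⟩ : Fin m) = ⟨k, by omega⟩ from
          Fin.ext (show k - 1 + 1 = k by omega)]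
        exact h2
    · rw [show cons1 g ⟨k, Nat.lt_of_succ_lt h⟩ = Dir.Rt from
        dif_neg (show ¬ 0 < k by omega)] at h1
      exact absurd h1 (by decide)

lemma cons1_succ {m : ℕ} (g : Fin m → Dir) (k : ℕ) (h : k + 1 < m + 1) :
    cons1 g ⟨k + 1, h⟩ = g ⟨k, by omega⟩ := dif_pos (Nat.succ_pos k)

def psiC {m : ℕ} : {g : Fin m → Dir // NoRL g ∧ NotEndR g} →
    {f : Fin (m + 1) → Dir // Ok f} :=
  fun p => ⟨cons1 p.1, ok_cons1 p.2⟩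

lemma psiC_bij {m : ℕ} : Function.Bijective (psiC (m := m)) := by
  constructor
  · rintro ⟨g, hg⟩ ⟨g', hg'⟩ h
    have hv : cons1 g = cons1 g' := congrArg Subtype.val h
    apply Subtype.ext
    funext i
    have hc := congrFun hv ⟨i.val + 1, by omega⟩
    show g i = g' i
    calc g i = cons1 g ⟨i.val + 1, by omega⟩ := (cons1_succ g i.val (by omega)).symm
      _ = cons1 g' ⟨i.val + 1, by omega⟩ := hc
      _ = g' i := cons1_succ g' i.val (by omega)
  · rintro ⟨f, hf⟩
    set g : Fin m → Dir := fun i => f ⟨i.val + 1, by omega⟩ with hgdef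
    have hg1 : NoRL g := by
      rintro k h ⟨h1, h2⟩
      apply hf.2.2 (k + 1) (by omega)
      refine ⟨h1, ?_⟩
      show f ⟨k + 1 + 1, by omega⟩ = Dir.L
      rw [show (⟨k + 1 + 1, by omega⟩ : Fin (m + 1)) = ⟨k + 1 + 1, by omega⟩ from rfl]
      exact h2
    have hg2 : NotEndR g := by
      intro i hi hR
      exact hf.2.1 ⟨i.val + 1, by omega⟩ (show i.val + 1 + 1 = m + 1 by omega) hR
    refine ⟨⟨g, hg1, hg2⟩, ?_⟩
    apply Subtype.ext
    show cons1 g = f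
    funext i
    by_cases h0 : 0 < i.val
    · rw [show cons1 g i = g ⟨i.val - 1, by omega⟩ from dif_pos h0]
      show f ⟨i.val - 1 + 1, by omega⟩ = f i
      rw [show (⟨i.val - 1 + 1, by omega⟩ : Fin (m + 1)) = i from
        Fin.ext (show i.val - 1 + 1 = i.val by omega)]
    · rw [show cons1 g i = Dir.Rt from dif_neg h0,
        show i = ⟨0, by omega⟩ from Fin.ext (show i.val = 0 by omega)]
      exact (hf.1 (by omega)).symm

lemma card_ok (m : ℕ) :
    Nat.card {f : Fin (m + 1) → Dir // Ok f} = Nat.fib (2 * m + 1) := by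
  rw [← Nat.card_congr (Equiv.ofBijective _ psiC_bij)]
  exact (card_AC m).1

end PathForestAux

theorem path_forest_count_root_one (n : ℕ) (hn : 1 ≤ n) :
    Nat.card {F : RootedForest (SimpleGraph.pathGraph n) //
      (⟨0, by omega⟩ : Fin n) ∈ F.roots} = Nat.fib (2 * n - 1) := by
  obtain ⟨m, rfl⟩ : ∃ m, n = m + 1 := ⟨n - 1, by omega⟩
  rw [show 2 * (m + 1) - 1 = 2 * m + 1 by omega]
  rw [← PathForestAux.card_ok m]
  exact PathForestAux.card_eq_ok (by omega)
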